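/- Let γ, I₀ be positive reals, 0 < ρ < 1, φ ∈ ℝ, and let m, L, ω₀ > 0 with I_SQL := m·L²·γ⁴/(4ω₀); set D := 1 + 2ρ·cos(2φ) + ρ² and Ω± := (±2ργ·sin(2φ) − iγ(1 − ρ²))/D. Then the complex number (ΔΩ₀)² := −(I₀·γ³/(2·I_SQL))·(Ω₊ − Ω₋)/(Ω₊·Ω₋) equals the real number (I₀/I_SQL)·(2ργ²·sin(2φ))·D/(4ρ²·sin²(2φ) + (1 − ρ²)²); this number is strictly positive when 0 < φ < π/2 and strictly negative when π/2 < φ < π. -/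

import Mathlib

/-- Leading-order shift of the doubly degenerate mechanical resonance `Ω² = 0`:
`(ΔΩ₀)² = -(I₀γ³/(2I_SQL))(Ω₊-Ω₋)/(Ω₊Ω₋)` is real, positive for `0 < φ < π/2`
(optical spring) and negative for `π/2 < φ < π` (non-oscillating instability). -/
theorem mechanical_resonance_shift
    (m L γ ω₀ I₀ ρ φ : ℝ)
    (hm : 0 < m) (hL : 0 < L) (hγ : 0 < γ) (hω : 0 < ω₀) (hI : 0 < I₀)
    (hρ0 : 0 < ρ) (hρ1 : ρ < 1)
    (D : ℝ) (hD : D = 1 + 2 * ρ * Real.cos (2 * φ) + ρ ^ 2)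
    (Ωp Ωm : ℂ)
    (hp : Ωp = (((2 * ρ * γ * Real.sin (2 * φ) : ℝ) : ℂ)
          - Complex.I * (γ : ℂ) * ((1 - ρ ^ 2 : ℝ) : ℂ)) / ((D : ℝ) : ℂ))
    (hm' : Ωm = (((-(2 * ρ * γ * Real.sin (2 * φ)) : ℝ) : ℂ)
          - Complex.I * (γ : ℂ) * ((1 - ρ ^ 2 : ℝ) : ℂ)) / ((D : ℝ) : ℂ))
    (ISQL : ℝ) (hSQL : ISQL = m * L ^ 2 * γ ^ 4 / (4 * ω₀))
    (ΔΩ₀sq : ℂ)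
    (hΔ : ΔΩ₀sq = -(((I₀ * γ ^ 3 / (2 * ISQL) : ℝ) : ℂ)) * (Ωp - Ωm) / (Ωp * Ωm)) :
    ΔΩ₀sq = (((I₀ / ISQL) * (2 * ρ * γ ^ 2 * Real.sin (2 * φ)) * D
        / (4 * ρ ^ 2 * Real.sin (2 * φ) ^ 2 + (1 - ρ ^ 2) ^ 2) : ℝ) : ℂ) ∧
    (0 < φ → φ < Real.pi / 2 →
      0 < (I₀ / ISQL) * (2 * ρ * γ ^ 2 * Real.sin (2 * φ)) * D
        / (4 * ρ ^ 2 * Real.sin (2 * φ) ^ 2 + (1 - ρ ^ 2) ^ 2)) ∧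
    (Real.pi / 2 < φ → φ < Real.pi →
      (I₀ / ISQL) * (2 * ρ * γ ^ 2 * Real.sin (2 * φ)) * D
        / (4 * ρ ^ 2 * Real.sin (2 * φ) ^ 2 + (1 - ρ ^ 2) ^ 2) < 0) := by
  set s := Real.sin (2 * φ) with hs
  have h12 : 0 < 1 - ρ ^ 2 := by nlinarith
  have hD0 : 0 < D := by
    rw [hD]; nlinarith [Real.neg_one_le_cos (2 * φ)]
  have hDc : ((D : ℝ) : ℂ) ≠ 0 := by exact_mod_cast hD0.ne'
  have hden : 0 < 4 * ρ ^ 2 * s ^ 2 + (1 - ρ ^ 2) ^ 2 :=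
    add_pos_of_nonneg_of_pos (by positivity) (pow_pos h12 2)
  have hSQL0 : 0 < ISQL := by rw [hSQL]; positivity
  have hab : 0 < (2 * ρ * γ * s) ^ 2 + (γ * (1 - ρ ^ 2)) ^ 2 :=
    add_pos_of_nonneg_of_pos (sq_nonneg _) (pow_pos (mul_pos hγ h12) 2)
  have h1 : Ωp - Ωm = ((2 * (2 * ρ * γ * s) / D : ℝ) : ℂ) := by
    rw [hp, hm']; push_cast; field_simp; ring
  have h2 : Ωp * Ωm = ((-(((2 * ρ * γ * s) ^ 2 + (γ * (1 - ρ ^ 2)) ^ 2)) / D ^ 2 : ℝ) : ℂ) := by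
    rw [hp, hm']; push_cast; field_simp
    linear_combination ((γ : ℂ) * (1 - (ρ : ℂ) ^ 2)) ^ 2 * Complex.I_sq
  refine ⟨?_, ?_, ?_⟩
  · rw [hΔ, h1, h2]
    norm_cast
    rw [div_div_eq_mul_div, div_eq_div_iff (neg_ne_zero.mpr hab.ne') hden.ne']
    field_simp [hD0.ne', hSQL0.ne']
    ring
  · intro h1' h2'
    have hs0 : 0 < s := by
      rw [hs]; exact Real.sin_pos_of_pos_of_lt_pi (by linarith) (by linarith)
    have : 0 < I₀ / ISQL := div_pos hI hSQL0
    positivity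
  · intro h1' h2'
    have hs0 : s < 0 := by
      have h := Real.sin_neg_of_neg_of_neg_pi_lt (x := 2 * φ - 2 * Real.pi)
        (by linarith) (by linarith)
      have e : Real.sin (2 * φ - 2 * Real.pi) = Real.sin (2 * φ) := by
        rw [Real.sin_sub]; simp
      rw [hs, ← e]; exact h
    apply div_neg_of_neg_of_pos _ hden
    have hfrac : 0 < I₀ / ISQL := div_pos hI hSQL0
    have hneg : 2 * ρ * γ ^ 2 * s < 0 :=
      mul_neg_of_pos_of_neg (by positivity) hs0
    exact mul_neg_of_neg_of_pos (mul_neg_of_pos_of_neg hfrac hneg) hD0
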